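/- Let A be a unital commutative semisimple regular Banach algebra over ℂ and a ∈ A. Then the following are equivalent: (1) a admits spectral synthesis, i.e., a lies in the closure of J_0(null(a)); (2) a admits synthesis with respect to the Banach A-module A' (the dual space with action (a·f)(b) = f(ab)); (3) a admits synthesis with respect to every Banach A-module M. -/

import Mathlib

open WeakDual

noncomputable section

universe u

namespace SpectralSynthesisAux

variable {A : Type u} [NormedCommRing A] [NormedAlgebra ℂ A] [CompleteSpace A]

lemma cont_eval (b : A) : Continuous fun χ : characterSpace ℂ A => χ b :=
  (WeakDual.eval_continuous b).comp continuous_subtype_val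

/-- strengthened regularity: vanishing on a neighborhood of a closed set -/
lemma lemmaA
    (hreg : ∀ E : Set (characterSpace ℂ A), IsClosed E →
      ∀ χ : characterSpace ℂ A, χ ∉ E → ∃ b : A, (∀ ψ ∈ E, ψ b = 0) ∧ χ b = 1)
    {E : Set (characterSpace ℂ A)} (hE : IsClosed E)
    {χ : characterSpace ℂ A} (hχ : χ ∉ E) :
    ∃ b : A, (∃ U : Set (characterSpace ℂ A), IsOpen U ∧ E ⊆ U ∧ ∀ ψ ∈ U, ψ b = 0)
      ∧ χ b = 1 := by
  obtain ⟨U, V, hU, hV, hEU, hχV, hUV⟩ :=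
    NormalSpace.normal E {χ} hE isClosed_singleton (by simpa using hχ)
  have hclU : χ ∉ closure U := fun h => by
    have : closure U ⊆ Vᶜ := closure_minimal (fun x hx hxV => hUV.le_bot ⟨hx, hxV⟩) hV.isClosed_compl
    exact this h (hχV rfl)
  obtain ⟨b, hb0, hb1⟩ := hreg (closure U) isClosed_closure χ hclU
  exact ⟨b, ⟨U, hU, hEU, fun ψ hψ => hb0 ψ (subset_closure hψ)⟩, hb1⟩

/-- the ideal of elements whose Gelfand transform vanishes on a neighborhood of `E` -/
def J0 (E : Set (characterSpace ℂ A)) : Ideal A where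
  carrier := {r : A | ∃ U : Set (characterSpace ℂ A), IsOpen U ∧ E ⊆ U ∧ ∀ χ ∈ U, χ r = 0}
  add_mem' := by
    rintro r s ⟨U, hU, hEU, hr⟩ ⟨V, hV, hEV, hs⟩
    exact ⟨U ∩ V, hU.inter hV, Set.subset_inter hEU hEV,
      fun χ hχ => by rw [map_add, hr χ hχ.1, hs χ hχ.2, add_zero]⟩
  zero_mem' := ⟨Set.univ, isOpen_univ, Set.subset_univ _, fun χ _ => map_zero χ⟩
  smul_mem' := by
    rintro c r ⟨U, hU, hEU, hr⟩
    exact ⟨U, hU, hEU, fun χ hχ => by rw [smul_eq_mul, map_mul, hr χ hχ, mul_zero]⟩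

lemma lemmaB
    (hreg : ∀ E : Set (characterSpace ℂ A), IsClosed E →
      ∀ χ : characterSpace ℂ A, χ ∉ E → ∃ b : A, (∀ ψ ∈ E, ψ b = 0) ∧ χ b = 1)
    (S : Ideal A) {K : Set (characterSpace ℂ A)} (hK : IsClosed K)
    (hdis : ∀ χ ∈ K, ∃ b ∈ S, χ b ≠ 0) :
    ∃ u ∈ S, ∀ χ ∈ K, χ u = 1 := by
  haveI : ContinuousConstSMul A A := ⟨fun c => continuous_const.mul continuous_id⟩
  set T : Ideal A := S ⊔ (J0 K).topologicalClosure with hT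
  have hTtop : T = ⊤ := by
    by_contra h
    obtain ⟨Mx, hMx, hTM⟩ := Ideal.exists_le_maximal T h
    haveI := hMx
    set χ := Mx.toCharacterSpace with hχdef
    have hSM : ∀ b ∈ S, χ b = 0 := fun b hb =>
      Mx.toCharacterSpace_apply_eq_zero_of_mem (hTM (le_sup_left (α := Ideal A) (a := S) hb))
    have hχK : χ ∈ K := by
      by_contra hχK
      obtain ⟨b, ⟨U, hU, hKU, hb0⟩, hb1⟩ := lemmaA hreg hK hχK
      have hbJ : b ∈ J0 K := ⟨U, hU, hKU, hb0⟩
      have : χ b = 0 := Mx.toCharacterSpace_apply_eq_zero_of_mem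
        (hTM ((le_sup_right (α := Ideal A) (a := S)) ((J0 K).le_topologicalClosure hbJ)))
      rw [hb1] at this; exact one_ne_zero this
    obtain ⟨b, hbS, hbne⟩ := hdis χ hχK
    exact hbne (hSM b hbS)
  have h1 : (1 : A) ∈ T := hTtop ▸ Submodule.mem_top
  obtain ⟨u, huS, v, hv, huv⟩ := Submodule.mem_sup.mp h1
  refine ⟨u, huS, fun χ hχ => ?_⟩
  have hχv : χ v = 0 := by
    have hsub : ((J0 K).topologicalClosure : Set A) ⊆ {x : A | χ x = 0} := by
      have : IsClosed {x : A | χ x = 0} :=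
        isClosed_eq (map_continuous (χ : characterSpace ℂ A)) continuous_const
      exact closure_minimal (fun x ⟨U, hU, hKU, hx⟩ => hx χ (hKU hχ)) this
    exact hsub hv
  have := congrArg χ huv
  rw [map_add, hχv, add_zero, map_one] at this
  exact this

/-- the main synthesis lemma: a closed ideal whose hull is contained in `null a`
contains the closure of `J₀(null a)`. -/
lemma key
    (hss : ∀ b : A, (∀ χ : characterSpace ℂ A, χ b = 0) → b = 0)
    (hreg : ∀ E : Set (characterSpace ℂ A), IsClosed E →
      ∀ χ : characterSpace ℂ A, χ ∉ E → ∃ b : A, (∀ ψ ∈ E, ψ b = 0) ∧ χ b = 1)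
    (a : A) (S : Ideal A) (hScl : IsClosed (S : Set A))
    (hhull : ∀ χ : characterSpace ℂ A, (∀ b ∈ S, χ b = 0) → χ a = 0)
    (ha : a ∈ closure {r : A | ∃ U : Set (characterSpace ℂ A), IsOpen U ∧
        {χ : characterSpace ℂ A | χ a = 0} ⊆ U ∧ ∀ χ ∈ U, χ r = 0}) :
    a ∈ S := by
  have hsub : {r : A | ∃ U : Set (characterSpace ℂ A), IsOpen U ∧
      {χ : characterSpace ℂ A | χ a = 0} ⊆ U ∧ ∀ χ ∈ U, χ r = 0} ⊆ (S : Set A) := by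
    rintro r ⟨U, hU, hnull, hrU⟩
    obtain ⟨u, huS, hu1⟩ := lemmaB hreg S (hU.isClosed_compl) (fun χ hχ => by
      by_contra h
      push_neg at h
      exact hχ (hnull (hhull χ h)))
    have h1 : r * (1 - u) = 0 := by
      apply hss
      intro χ
      by_cases hχ : χ ∈ U
      · rw [map_mul, hrU χ hχ, zero_mul]
      · rw [map_mul, map_sub, map_one, hu1 χ hχ, sub_self, mul_zero]
    rw [mul_sub, mul_one, sub_eq_zero] at h1
    rw [h1]
    exact Ideal.mul_mem_left S r huS
  exact closure_minimal hsub hScl ha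

/-- the dual space as a Banach `A`-module, with action `(b • f) c = f (b * c)` -/
def DualM (A : Type u) [NormedCommRing A] [NormedAlgebra ℂ A] : Type u := A →L[ℂ] ℂ

/-- interpret an element of `DualM A` as a continuous linear functional -/
def DualM.toL (f : DualM A) : A →L[ℂ] ℂ := f

/-- interpret a continuous linear functional as an element of `DualM A` -/
def DualM.ofL (f : A →L[ℂ] ℂ) : DualM A := f

instance : NormedAddCommGroup (DualM A) :=
  inferInstanceAs (NormedAddCommGroup (A →L[ℂ] ℂ))

instance : CompleteSpace (DualM A) :=
  inferInstanceAs (CompleteSpace (A →L[ℂ] ℂ))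

lemma DualM.ext {f g : DualM A} (h : ∀ c, DualM.toL f c = DualM.toL g c) : f = g :=
  ContinuousLinearMap.ext h

instance : SMul A (DualM A) :=
  ⟨fun b f => DualM.ofL ((DualM.toL f).comp (ContinuousLinearMap.mul ℂ A b))⟩

lemma DualM.toL_smul (b : A) (f : DualM A) (c : A) :
    DualM.toL (b • f) c = DualM.toL f (b * c) := rfl

lemma DualM.toL_add (f g : DualM A) (c : A) :
    DualM.toL (f + g) c = DualM.toL f c + DualM.toL g c := rfl

lemma DualM.toL_zero (c : A) : DualM.toL (0 : DualM A) c = 0 := rfl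

instance : Module A (DualM A) where
  one_smul f := DualM.ext fun c => by rw [DualM.toL_smul, one_mul]
  mul_smul b b' f := DualM.ext fun c => by
    rw [DualM.toL_smul, DualM.toL_smul, DualM.toL_smul, mul_assoc, mul_left_comm]
  smul_zero b := DualM.ext fun c => by rw [DualM.toL_smul, DualM.toL_zero, DualM.toL_zero]
  smul_add b f g := DualM.ext fun c => by
    rw [DualM.toL_smul, DualM.toL_add, DualM.toL_add, DualM.toL_smul, DualM.toL_smul]
  add_smul b b' f := DualM.ext fun c => by
    rw [DualM.toL_smul, DualM.toL_add, DualM.toL_smul, DualM.toL_smul, add_mul, map_add]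
  zero_smul f := DualM.ext fun c => by
    rw [DualM.toL_smul, DualM.toL_zero, zero_mul, map_zero]

lemma DualM.norm_smul_le (b : A) (f : DualM A) :
    ‖b • f‖ ≤ 1 * ‖b‖ * ‖f‖ := by
  rw [one_mul]
  calc ‖(DualM.toL f).comp (ContinuousLinearMap.mul ℂ A b)‖
      ≤ ‖DualM.toL f‖ * ‖ContinuousLinearMap.mul ℂ A b‖ :=
        ContinuousLinearMap.opNorm_comp_le _ _
    _ ≤ ‖DualM.toL f‖ * ‖b‖ := by
        gcongr
        exact ContinuousLinearMap.opNorm_mul_apply_le ℂ A b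
    _ = ‖b‖ * ‖f‖ := mul_comm _ _

lemma DualM.smul_eq_zero_iff (b : A) (f : DualM A) :
    b • f = 0 ↔ ∀ c : A, DualM.toL f (b * c) = 0 := by
  constructor
  · intro h c
    rw [← DualM.toL_smul b f c, h]
    rfl
  · intro h
    exact DualM.ext fun c => by rw [DualM.toL_smul, h c, DualM.toL_zero]


section Implications

variable (hss : ∀ b : A, (∀ χ : characterSpace ℂ A, χ b = 0) → b = 0)
variable (hreg : ∀ E : Set (characterSpace ℂ A), IsClosed E →
      ∀ χ : characterSpace ℂ A, χ ∉ E → ∃ b : A, (∀ ψ ∈ E, ψ b = 0) ∧ χ b = 1)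
variable (a : A)

include hss hreg in
lemma PtoQ
    (hP : a ∈ closure {r : A | ∃ U : Set (characterSpace ℂ A), IsOpen U ∧
        {χ : characterSpace ℂ A | χ a = 0} ⊆ U ∧ ∀ χ ∈ U, χ r = 0}) :
    ∀ f : A →L[ℂ] ℂ,
        {χ : characterSpace ℂ A | ∀ b : A, (∀ c : A, f (b * c) = 0) → χ b = 0} ⊆
          {χ : characterSpace ℂ A | χ a = 0} →
        ∀ b : A, f (a * b) = 0 := by
  intro f hsupp b
  set S : Ideal A :=
    { carrier := {r : A | ∀ c : A, f (r * c) = 0}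
      add_mem' := fun {r} {s} hr hs c => by rw [add_mul, map_add, hr c, hs c, add_zero]
      zero_mem' := fun c => by rw [zero_mul, map_zero]
      smul_mem' := fun c' r hr c => by
        have h : c' • r * c = r * (c' * c) := by rw [smul_eq_mul]; ring
        rw [h]; exact hr (c' * c) } with hSdef
  have hScl : IsClosed (S : Set A) := by
    have h : (S : Set A) = ⋂ c : A, {r : A | f (r * c) = 0} := by
      ext r; simp only [hSdef, Set.mem_iInter, SetLike.mem_coe, Submodule.mem_mk,
        AddSubmonoid.mem_mk, AddSubsemigroup.mem_mk, Set.mem_setOf_eq]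
    rw [h]
    exact isClosed_iInter fun c =>
      isClosed_eq (f.continuous.comp (continuous_id.mul continuous_const)) continuous_const
  have ha : a ∈ S := key hss hreg a S hScl (fun χ h => hsupp (fun r hr => h r hr)) hP
  exact ha b

include hreg in
lemma QtoP
    (hQ : ∀ f : A →L[ℂ] ℂ,
        {χ : characterSpace ℂ A | ∀ b : A, (∀ c : A, f (b * c) = 0) → χ b = 0} ⊆
          {χ : characterSpace ℂ A | χ a = 0} →
        ∀ b : A, f (a * b) = 0) :
    a ∈ closure {r : A | ∃ U : Set (characterSpace ℂ A), IsOpen U ∧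
        {χ : characterSpace ℂ A | χ a = 0} ⊆ U ∧ ∀ χ ∈ U, χ r = 0} := by
  by_contra ha
  set p : Submodule ℂ A :=
    { carrier := {r : A | ∃ U : Set (characterSpace ℂ A), IsOpen U ∧
        {χ : characterSpace ℂ A | χ a = 0} ⊆ U ∧ ∀ χ ∈ U, χ r = 0}
      add_mem' := by
        rintro r s ⟨U, hU, hEU, hr⟩ ⟨V, hV, hEV, hs⟩
        exact ⟨U ∩ V, hU.inter hV, Set.subset_inter hEU hEV,
          fun χ hχ => by rw [map_add, hr χ hχ.1, hs χ hχ.2, add_zero]⟩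
      zero_mem' := ⟨Set.univ, isOpen_univ, Set.subset_univ _, fun χ _ => map_zero χ⟩
      smul_mem' := by
        rintro c r ⟨U, hU, hEU, hr⟩
        exact ⟨U, hU, hEU, fun χ hχ => by rw [map_smul, hr χ hχ, smul_zero]⟩ } with hpdef
  set q := p.topologicalClosure with hqdef
  haveI hqc : IsClosed (q : Set A) := Submodule.isClosed_topologicalClosure p
  have haq : a ∉ q := by
    intro h
    apply ha
    have h' : a ∈ (q : Set A) := h
    rw [Submodule.topologicalClosure_coe] at h'
    exact h'
  have hx0 : (Submodule.Quotient.mk a : A ⧸ q) ≠ 0 := fun h =>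
    haq (by rwa [Submodule.Quotient.mk_eq_zero] at h)
  obtain ⟨g, -, hg⟩ := exists_dual_vector ℂ (Submodule.Quotient.mk a : A ⧸ q) (norm_ne_zero_iff.mpr hx0)
  set mkC : A →L[ℂ] A ⧸ q :=
    LinearMap.mkContinuous q.mkQ 1
      (fun x => by simpa using Submodule.Quotient.norm_mk_le q x) with hmkC
  set f : A →L[ℂ] ℂ := g.comp mkC with hfdef
  have hf0 : ∀ r ∈ (p : Set A), f r = 0 := by
    intro r hr
    have : (Submodule.Quotient.mk r : A ⧸ q) = 0 :=
      (Submodule.Quotient.mk_eq_zero q).mpr (p.le_topologicalClosure hr)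
    show g (Submodule.Quotient.mk r) = 0
    rw [this, map_zero]
  have hfa : f a ≠ 0 := by
    show g (Submodule.Quotient.mk a) ≠ 0
    rw [hg]
    simpa using norm_ne_zero_iff.mpr hx0
  have hsuppf : {χ : characterSpace ℂ A | ∀ b : A, (∀ c : A, f (b * c) = 0) → χ b = 0} ⊆
      {χ : characterSpace ℂ A | χ a = 0} := by
    intro χ hχ
    by_contra hχa
    have hnullcl : IsClosed {ψ : characterSpace ℂ A | ψ a = 0} :=
      isClosed_eq (cont_eval a) continuous_const
    obtain ⟨b, ⟨U, hU, hn, hb0⟩, hb1⟩ := lemmaA hreg hnullcl (χ := χ) hχa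
    have hb : ∀ c : A, f (b * c) = 0 := fun c =>
      hf0 _ ⟨U, hU, hn, fun ψ hψ => by rw [map_mul, hb0 ψ hψ, zero_mul]⟩
    have := hχ b hb
    rw [hb1] at this
    exact one_ne_zero this
  have := hQ f hsuppf 1
  rw [mul_one] at this
  exact hfa this

include hss hreg in
lemma PtoR
    (hP : a ∈ closure {r : A | ∃ U : Set (characterSpace ℂ A), IsOpen U ∧
        {χ : characterSpace ℂ A | χ a = 0} ⊆ U ∧ ∀ χ ∈ U, χ r = 0}) :
    ∀ (M : Type u) [NormedAddCommGroup M] [Module A M],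
        (∃ C : ℝ, ∀ (b : A) (x : M), ‖b • x‖ ≤ C * ‖b‖ * ‖x‖) →
        ∀ (_ : CompleteSpace M) (x : M),
          {χ : characterSpace ℂ A | ∀ b : A, b • x = 0 → χ b = 0} ⊆
            {χ : characterSpace ℂ A | χ a = 0} →
          a • x = 0 := by
  intro M _ _ hbound _ x hsupp
  obtain ⟨C, hC⟩ := hbound
  have hC' : ∀ b : A, ‖b • x‖ ≤ max C 0 * ‖x‖ * ‖b‖ := fun b => by
    calc ‖b • x‖ ≤ C * ‖b‖ * ‖x‖ := hC b x
      _ ≤ max C 0 * ‖b‖ * ‖x‖ := by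
          have h1 := norm_nonneg b
          have h2 := norm_nonneg x
          exact mul_le_mul_of_nonneg_right
            (mul_le_mul_of_nonneg_right (le_max_left C 0) h1) h2
      _ = max C 0 * ‖x‖ * ‖b‖ := by ring
  have hcont : Continuous fun b : A => b • x := by
    refine (LipschitzWith.of_dist_le_mul (K := Real.toNNReal (max C 0 * ‖x‖)) ?_).continuous
    intro b c
    rw [dist_eq_norm, dist_eq_norm, ← sub_smul,
      Real.coe_toNNReal _ (mul_nonneg (le_max_right C 0) (norm_nonneg x))]
    exact hC' (b - c)
  set S : Ideal A :=
    { carrier := {b : A | b • x = 0}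
      add_mem' := fun {r} {s} hr hs => by
        show (r + s) • x = 0
        rw [add_smul, hr, hs, add_zero]
      zero_mem' := zero_smul A x
      smul_mem' := fun c b hb => by
        show (c • b) • x = 0
        rw [smul_eq_mul, mul_smul, hb, smul_zero] } with hSdef
  have hScl : IsClosed (S : Set A) := by
    have h : (S : Set A) = (fun b : A => b • x) ⁻¹' {0} := by
      ext r; simp only [hSdef, SetLike.mem_coe, Submodule.mem_mk, AddSubmonoid.mem_mk,
        AddSubsemigroup.mem_mk, Set.mem_setOf_eq, Set.mem_preimage, Set.mem_singleton_iff]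
    rw [h]
    exact isClosed_singleton.preimage hcont
  exact key hss hreg a S hScl (fun χ h => hsupp (fun b hb => h b hb)) hP

lemma RtoQ
    (hR : ∀ (M : Type u) [NormedAddCommGroup M] [Module A M],
        (∃ C : ℝ, ∀ (b : A) (x : M), ‖b • x‖ ≤ C * ‖b‖ * ‖x‖) →
        ∀ (_ : CompleteSpace M) (x : M),
          {χ : characterSpace ℂ A | ∀ b : A, b • x = 0 → χ b = 0} ⊆
            {χ : characterSpace ℂ A | χ a = 0} →
          a • x = 0) :
    ∀ f : A →L[ℂ] ℂ,
        {χ : characterSpace ℂ A | ∀ b : A, (∀ c : A, f (b * c) = 0) → χ b = 0} ⊆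
          {χ : characterSpace ℂ A | χ a = 0} →
        ∀ b : A, f (a * b) = 0 := by
  intro f hsupp
  have h := hR (DualM A) ⟨1, fun b g => DualM.norm_smul_le b g⟩ inferInstance (DualM.ofL f)
    (by
      intro χ hχ
      apply hsupp
      intro b hb
      exact hχ b ((DualM.smul_eq_zero_iff b _).mpr hb))
  exact (DualM.smul_eq_zero_iff a (DualM.ofL f)).mp h

end Implications

end SpectralSynthesisAux

end

/-- For an element `a` of a unital commutative semisimple regular Banach algebra `A`,
the following are equivalent:
(1) `a` admits spectral synthesis, i.e. `a` lies in the closure of `J₀(null a)`;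
(2) `a` admits synthesis with respect to the dual Banach module `A'` with
    action `(a • f) b = f (a * b)`;
(3) `a` admits synthesis with respect to every Banach `A`-module. -/
theorem spectral_synthesis_tfae
    {A : Type u} [NormedCommRing A] [NormedAlgebra ℂ A] [CompleteSpace A]
    (hss : ∀ b : A, (∀ χ : characterSpace ℂ A, χ b = 0) → b = 0)
    (hreg : ∀ E : Set (characterSpace ℂ A), IsClosed E →
      ∀ χ : characterSpace ℂ A, χ ∉ E → ∃ b : A, (∀ ψ ∈ E, ψ b = 0) ∧ χ b = 1)
    (a : A) :
    ((a ∈ closure {r : A | ∃ U : Set (characterSpace ℂ A), IsOpen U ∧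
        {χ : characterSpace ℂ A | χ a = 0} ⊆ U ∧ ∀ χ ∈ U, χ r = 0}) ↔
      (∀ f : A →L[ℂ] ℂ,
        {χ : characterSpace ℂ A | ∀ b : A, (∀ c : A, f (b * c) = 0) → χ b = 0} ⊆
          {χ : characterSpace ℂ A | χ a = 0} →
        ∀ b : A, f (a * b) = 0)) ∧
    ((a ∈ closure {r : A | ∃ U : Set (characterSpace ℂ A), IsOpen U ∧
        {χ : characterSpace ℂ A | χ a = 0} ⊆ U ∧ ∀ χ ∈ U, χ r = 0}) ↔
      (∀ (M : Type u) [NormedAddCommGroup M] [Module A M],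
        (∃ C : ℝ, ∀ (b : A) (x : M), ‖b • x‖ ≤ C * ‖b‖ * ‖x‖) →
        ∀ (_ : CompleteSpace M) (x : M),
          {χ : characterSpace ℂ A | ∀ b : A, b • x = 0 → χ b = 0} ⊆
            {χ : characterSpace ℂ A | χ a = 0} →
          a • x = 0)) := by
  exact ⟨⟨fun hP => SpectralSynthesisAux.PtoQ hss hreg a hP,
      fun hQ => SpectralSynthesisAux.QtoP hreg a hQ⟩,
    ⟨fun hP => SpectralSynthesisAux.PtoR hss hreg a hP,
      fun hR => SpectralSynthesisAux.QtoP hreg a (SpectralSynthesisAux.RtoQ a hR)⟩⟩
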